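/- arXiv:2109.11764 — 2 statements merged into one kernel-verified Lean document; each statement's English description precedes it below -/
import Mathlib

section
/- For every real y with −1 ≤ y ≤ 1, sup_{z∈ℝ} (yz − log cosh z) = (1/2)[(1+y)log(1+y) + (1−y)log(1−y)] (with the convention 0·log 0 = 0), while for every real y with |y| > 1 one has sup_{z∈ℝ} (yz − log cosh z) = +∞. -/
open Real Set Filter

/-- Upper bound: for `y ∈ [−1,1]`, `yz − log cosh z ≤ g(y)`. -/
lemma aux_upper (y z : ℝ) (h1 : -1 ≤ y) (h2 : y ≤ 1) :
    y * z - Real.log (Real.cosh z)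
      ≤ ((1 + y) * Real.log (1 + y) + (1 - y) * Real.log (1 - y)) / 2 := by
  rcases eq_or_lt_of_le h2 with rfl | h2'
  · -- y = 1
    have hc : Real.exp z / 2 ≤ Real.cosh z := by
      rw [Real.cosh_eq]; have := (Real.exp_pos (-z)).le; linarith
    have hlog : Real.log (Real.exp z / 2) ≤ Real.log (Real.cosh z) :=
      Real.log_le_log (by positivity) hc
    rw [Real.log_div (Real.exp_ne_zero z) two_ne_zero, Real.log_exp] at hlog
    simp only [sub_self, Real.log_zero]
    norm_num
    linarith
  rcases eq_or_lt_of_le h1 with rfl | h1'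
  · -- y = -1
    have hc : Real.exp (-z) / 2 ≤ Real.cosh z := by
      rw [Real.cosh_eq]; have := (Real.exp_pos z).le; linarith
    have hlog : Real.log (Real.exp (-z) / 2) ≤ Real.log (Real.cosh z) :=
      Real.log_le_log (by positivity) hc
    rw [Real.log_div (Real.exp_ne_zero _) two_ne_zero, Real.log_exp] at hlog
    simp only [add_neg_cancel, Real.log_zero]
    norm_num
    linarith
  -- -1 < y < 1
  have hp1 : (0:ℝ) < 1 + y := by linarith
  have hp2 : (0:ℝ) < 1 - y := by linarith
  set a : ℝ := Real.exp z / (1 + y) with ha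
  set b : ℝ := Real.exp (-z) / (1 - y) with hb
  have ha0 : 0 < a := by positivity
  have hb0 : 0 < b := by positivity
  have hgm := Real.geom_mean_le_arith_mean2_weighted
    (w₁ := (1 + y)/2) (w₂ := (1 - y)/2) (p₁ := a) (p₂ := b)
    (by linarith) (by linarith) ha0.le hb0.le (by ring)
  have hsum : (1 + y)/2 * a + (1 - y)/2 * b = Real.cosh z := by
    rw [ha, hb, Real.cosh_eq]; field_simp
  rw [hsum] at hgm
  have hlog : Real.log (a ^ ((1 + y)/2) * b ^ ((1 - y)/2)) ≤ Real.log (Real.cosh z) :=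
    Real.log_le_log (by positivity) hgm
  rw [Real.log_mul (by positivity) (by positivity),
    Real.log_rpow ha0, Real.log_rpow hb0, ha, hb,
    Real.log_div (Real.exp_ne_zero _) hp1.ne',
    Real.log_div (Real.exp_ne_zero _) hp2.ne',
    Real.log_exp, Real.log_exp] at hlog
  nlinarith [hlog]

/-- The supremum is attained at `arctanh y` for `|y| < 1`. -/
lemma aux_attain (y : ℝ) (h1 : -1 < y) (h2 : y < 1) :
    ∃ z : ℝ, y * z - Real.log (Real.cosh z)
      = ((1 + y) * Real.log (1 + y) + (1 - y) * Real.log (1 - y)) / 2 := by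
  have hp1 : (0:ℝ) < 1 + y := by linarith
  have hp2 : (0:ℝ) < 1 - y := by linarith
  refine ⟨(Real.log (1 + y) - Real.log (1 - y)) / 2, ?_⟩
  set z := (Real.log (1 + y) - Real.log (1 - y)) / 2 with hz
  set s := Real.exp (Real.log (1 + y) / 2) with hs
  set t := Real.exp (Real.log (1 - y) / 2) with ht
  have hs0 : 0 < s := Real.exp_pos _
  have ht0 : 0 < t := Real.exp_pos _
  have hss : s * s = 1 + y := by
    rw [hs, ← Real.exp_add]
    rw [show Real.log (1 + y) / 2 + Real.log (1 + y) / 2 = Real.log (1 + y) by ring,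
      Real.exp_log hp1]
  have htt : t * t = 1 - y := by
    rw [ht, ← Real.exp_add]
    rw [show Real.log (1 - y) / 2 + Real.log (1 - y) / 2 = Real.log (1 - y) by ring,
      Real.exp_log hp2]
  have hez : Real.exp z = s / t := by
    rw [hz, hs, ht, ← Real.exp_sub]; ring_nf
  have henz : Real.exp (-z) = t / s := by
    rw [hz, hs, ht, ← Real.exp_sub]; ring_nf
  have hcosh : Real.cosh z = 1 / (s * t) := by
    rw [Real.cosh_eq, hez, henz]
    field_simp
    linear_combination hss + htt
  have hlogcosh : Real.log (Real.cosh z) = -(Real.log (1 + y) / 2 + Real.log (1 - y) / 2) := by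
    rw [hcosh, one_div, Real.log_inv, Real.log_mul hs0.ne' ht0.ne', hs, ht,
      Real.log_exp, Real.log_exp]
  rw [hlogcosh, hz]; ring

/-- Near-optimality at `y = 1`: the value `z − log cosh z` approaches `log 2`. -/
lemma aux_near (ε : ℝ) (hε : 0 < ε) :
    ∃ z : ℝ, Real.log 2 - ε ≤ z - Real.log (Real.cosh z) := by
  refine ⟨-Real.log ε / 2, ?_⟩
  set z := -Real.log ε / 2 with hz
  have h2z : Real.exp (-(2*z)) = ε := by
    rw [hz]; rw [show -(2 * (-Real.log ε / 2)) = Real.log ε by ring, Real.exp_log hε]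
  have hcosh : Real.cosh z = Real.exp z * (1 + ε) / 2 := by
    rw [Real.cosh_eq, show -z = z + -(2*z) by ring, Real.exp_add, h2z]; ring
  have hlog : Real.log (Real.cosh z) = z + Real.log (1 + ε) - Real.log 2 := by
    rw [hcosh, Real.log_div (by positivity) two_ne_zero,
      Real.log_mul (Real.exp_ne_zero _) (by positivity), Real.log_exp]
  have hle : Real.log (1 + ε) ≤ ε := by
    have := Real.log_le_sub_one_of_pos (x := 1 + ε) (by positivity)
    linarith
  rw [hlog]; linarith

/-- Unboundedness for `y > 1`. -/
lemma aux_unbdd (y r : ℝ) (hy : 1 < y) :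
    ∃ z : ℝ, r < y * z - Real.log (Real.cosh z) := by
  refine ⟨max 0 ((r + 1) / (y - 1)), ?_⟩
  set z := max 0 ((r + 1) / (y - 1)) with hz
  have hz0 : 0 ≤ z := le_max_left _ _
  have hc : Real.cosh z ≤ Real.exp z := by
    rw [Real.cosh_eq]
    have : Real.exp (-z) ≤ Real.exp z := Real.exp_le_exp.mpr (by linarith)
    linarith
  have hlog : Real.log (Real.cosh z) ≤ z := by
    calc Real.log (Real.cosh z) ≤ Real.log (Real.exp z) :=
          Real.log_le_log (Real.cosh_pos z) hc
      _ = z := Real.log_exp z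
  have hyz : r + 1 ≤ (y - 1) * z := by
    have hz2 : (r + 1) / (y - 1) ≤ z := le_max_right _ _
    have : (r + 1) / (y - 1) * (y - 1) ≤ z * (y - 1) :=
      mul_le_mul_of_nonneg_right hz2 (by linarith)
    rw [div_mul_cancel₀ _ (by linarith : y - 1 ≠ 0)] at this
    linarith
  nlinarith

/-- For `y ∈ [−1,1]`, `sup_{z∈ℝ} (yz − log cosh z) = ½[(1+y)log(1+y) + (1−y)log(1−y)]`
(the convention `0·log 0 = 0` is automatic since `Real.log 0 = 0`), while for `|y| > 1`
the supremum (computed in the extended reals) is `+∞`. -/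
theorem statement0 (y : ℝ) :
    (y ∈ Set.Icc (-1 : ℝ) 1 →
      (⨆ z : ℝ, ((y * z - Real.log (Real.cosh z) : ℝ) : EReal))
        = ((((1 + y) * Real.log (1 + y) + (1 - y) * Real.log (1 - y)) / 2 : ℝ) : EReal)) ∧
    (1 < |y| →
      (⨆ z : ℝ, ((y * z - Real.log (Real.cosh z) : ℝ) : EReal)) = ⊤) := by
  constructor
  · rintro ⟨h1, h2⟩
    apply le_antisymm
    · exact iSup_le fun z => EReal.coe_le_coe_iff.mpr (aux_upper y z h1 h2)
    · rcases eq_or_lt_of_le h2 with rfl | h2'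
      · -- y = 1
        rw [le_iSup_iff]
        intro b hb
        induction b using EReal.rec with
        | bot => exact absurd (hb 0) (by simp)
        | top => exact le_top
        | coe r =>
          have hr : ∀ z : ℝ, z - Real.log (Real.cosh z) ≤ r := by
            intro z
            have := hb z
            rw [EReal.coe_le_coe_iff] at this
            linarith
          have : Real.log 2 ≤ r := by
            apply le_of_forall_pos_le_add
            intro ε hε
            obtain ⟨z, hzl⟩ := aux_near ε hε
            have := hr z
            linarith
          rw [EReal.coe_le_coe_iff]
          simp only [sub_self, Real.log_zero]
          norm_num
          linarith
      rcases eq_or_lt_of_le h1 with rfl | h1'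
      · -- y = -1
        rw [le_iSup_iff]
        intro b hb
        induction b using EReal.rec with
        | bot => exact absurd (hb 0) (by simp)
        | top => exact le_top
        | coe r =>
          have hr : ∀ z : ℝ, z - Real.log (Real.cosh z) ≤ r := by
            intro z
            have := hb (-z)
            rw [EReal.coe_le_coe_iff] at this
            rw [Real.cosh_neg] at this
            linarith
          have : Real.log 2 ≤ r := by
            apply le_of_forall_pos_le_add
            intro ε hε
            obtain ⟨z, hzl⟩ := aux_near ε hε
            have := hr z
            linarith
          rw [EReal.coe_le_coe_iff]
          simp only [add_neg_cancel, Real.log_zero]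
          norm_num
          linarith
      · obtain ⟨z, hzeq⟩ := aux_attain y h1' h2'
        calc ((((1 + y) * Real.log (1 + y) + (1 - y) * Real.log (1 - y)) / 2 : ℝ) : EReal)
            = ((y * z - Real.log (Real.cosh z) : ℝ) : EReal) := by rw [hzeq]
          _ ≤ _ := le_iSup (fun z : ℝ => ((y * z - Real.log (Real.cosh z) : ℝ) : EReal)) z
  · intro hy
    rw [iSup_eq_top]
    intro b hb
    induction b using EReal.rec with
    | bot => exact ⟨0, EReal.bot_lt_coe _⟩
    | top => exact absurd hb (lt_irrefl _)
    | coe r =>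
      rcases lt_or_ge 1 y with hy1 | hy1
      · obtain ⟨z, hz⟩ := aux_unbdd y r hy1
        exact ⟨z, EReal.coe_lt_coe_iff.mpr hz⟩
      · have hy2 : 1 < -y := by
          rcases abs_cases y with ⟨h, _⟩ | ⟨h, _⟩ <;> [linarith; linarith]
        obtain ⟨z, hz⟩ := aux_unbdd (-y) r hy2
        refine ⟨-z, EReal.coe_lt_coe_iff.mpr ?_⟩
        rw [Real.cosh_neg]
        linarith
end

section
/- Let p ≥ 3 be an integer and β > β*(p). Then the derivative H′_{β,p}(x) = βpx^{p−1} − arctanh(x) has at most 3 zeros in (0,1), and there exists m̲(β,p) ∈ (0, m_*(β,p)) such that H′_{β,p} ≤ 0 on (0, m̲(β,p)), H′_{β,p} ≥ 0 on (m̲(β,p), m_*(β,p)), and H′_{β,p} ≤ 0 on (m_*(β,p), 1). -/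
open Real Set Filter

/-- `I(x) = ½[(1+x)log(1+x) + (1−x)log(1−x)]` (with `Real.log 0 = 0`). -/
noncomputable def bahI (x : ℝ) : ℝ :=
  ((1 + x) * Real.log (1 + x) + (1 - x) * Real.log (1 - x)) / 2

/-- `H_{β,p}(x) = β xᵖ − I(x)`. -/
noncomputable def bahH (β : ℝ) (p : ℕ) (x : ℝ) : ℝ := β * x ^ p - bahI x

/-- `β*(p) = sup {β ≥ 0 : sup_{x∈[−1,1]} H_{β,p}(x) = 0}`. -/
noncomputable def betaStar (p : ℕ) : ℝ :=
  sSup {β : ℝ | 0 ≤ β ∧ sSup (bahH β p '' Set.Icc (-1 : ℝ) 1) = 0}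

/-- inverse hyperbolic tangent. -/
noncomputable def arctanh (x : ℝ) : ℝ := Real.log ((1 + x) / (1 - x)) / 2

lemma arctanh_hasDerivAt {x : ℝ} (h1 : -1 < x) (h2 : x < 1) :
    HasDerivAt arctanh (1/(1-x^2)) x := by
  have hx1 : (0:ℝ) < 1 + x := by linarith
  have hx2 : (0:ℝ) < 1 - x := by linarith
  have hg : HasDerivAt (fun y : ℝ => (Real.log (1+y) - Real.log (1-y))/2)
      ((1/(1+x) + 1/(1-x))/2) x := by
    have d1 : HasDerivAt (fun y : ℝ => Real.log (1+y)) (1/(1+x)) x := by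
      have := ((hasDerivAt_id x).const_add 1).log (by positivity)
      simpa using this
    have d2 : HasDerivAt (fun y : ℝ => Real.log (1-y)) (-(1/(1-x))) x := by
      have h := ((hasDerivAt_id x).const_sub 1).log (ne_of_gt hx2)
      simpa [div_eq_mul_inv] using h
    simpa [sub_neg_eq_add] using (d1.sub d2).div_const 2
  have heq : arctanh =ᶠ[nhds x] (fun y : ℝ => (Real.log (1+y) - Real.log (1-y))/2) := by
    filter_upwards [Ioo_mem_nhds h1 h2] with y hy
    unfold arctanh
    rw [Real.log_div (by linarith [hy.1]) (by linarith [hy.2])]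
  have hval : (1/(1+x) + 1/(1-x))/2 = 1/(1-x^2) := by
    have h3 : (1:ℝ) - x^2 > 0 := by nlinarith
    field_simp
    ring
  rw [← hval]
  exact hg.congr_of_eventuallyEq heq

lemma arctanh_zero : arctanh 0 = 0 := by simp [arctanh]

lemma arctanh_le_arctanh {a b : ℝ} (ha : -1 < a) (hab : a ≤ b) (hb : b < 1) :
    arctanh a ≤ arctanh b := by
  unfold arctanh
  have h1 : (0:ℝ) < 1 - a := by linarith
  have h2 : (0:ℝ) < 1 - b := by linarith
  have h3 : (0:ℝ) < 1 + a := by linarith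
  have hle : (1+a)/(1-a) ≤ (1+b)/(1-b) := by
    rw [div_le_div_iff₀ h1 h2]; nlinarith
  have := Real.log_le_log (by positivity) hle
  linarith

lemma self_le_arctanh {x : ℝ} (h0 : 0 ≤ x) (h1 : x < 1) : x ≤ arctanh x := by
  rcases eq_or_lt_of_le h0 with h | h
  · simp [← h, arctanh_zero]
  · obtain ⟨ξ, hξ, hs⟩ := exists_hasDerivAt_eq_slope arctanh (fun y => 1/(1-y^2)) h
      (fun y hy => (arctanh_hasDerivAt (by simp at hy; linarith [hy.1] : -1 < y)
        (by simp at hy; linarith [hy.2] : y < 1)).continuousAt.continuousWithinAt)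
      (fun y hy => arctanh_hasDerivAt (by linarith [hy.1]) (by linarith [hy.2]))
  -- slope = arctanh x / x ; derivative ≥ 1
    have hξ2 : ξ^2 < 1 := by nlinarith [hξ.1, hξ.2, h1]
    have hd : (1:ℝ) ≤ 1/(1-ξ^2) := by
      rw [le_div_iff₀ (by linarith)]; nlinarith
    rw [arctanh_zero, sub_zero, sub_zero] at hs
    have : (1:ℝ) ≤ arctanh x / x := by rw [← hs]; exact hd
    rw [le_div_iff₀ h] at this
    linarith

-- derivative of v
lemma vfun_hasDerivAt (q : ℕ) {x : ℝ} (h1 : -1 < x) (h2 : x < 1) :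
    HasDerivAt (fun y : ℝ => y/(1-y^2) - ((q:ℝ)+2) * arctanh y)
      ((((q:ℝ)+3)*x^2 - ((q:ℝ)+1))/(1-x^2)^2) x := by
  have hx2 : (0:ℝ) < 1 - x^2 := by nlinarith
  have d1 : HasDerivAt (fun y : ℝ => y/(1-y^2)) ((1+x^2)/(1-x^2)^2) x := by
    have da : HasDerivAt (fun y : ℝ => 1 - y^2) (-(2*x)) x := by
      simpa using ((hasDerivAt_pow 2 x).const_sub 1)
    have := (hasDerivAt_id x).div da (ne_of_gt hx2)
    refine this.congr_deriv ?_
    field_simp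
    simp only [id_eq]
    ring
  have d2 : HasDerivAt (fun y : ℝ => ((q:ℝ)+2) * arctanh y) (((q:ℝ)+2) * (1/(1-x^2))) x :=
    (arctanh_hasDerivAt h1 h2).const_mul _
  have := d1.sub d2
  refine this.congr_deriv ?_
  field_simp
  ring

-- derivative of u
lemma ufun_hasDerivAt (q : ℕ) {x : ℝ} (h0 : 0 < x) (h1 : x < 1) :
    HasDerivAt (fun y : ℝ => arctanh y / y^(q+2))
      ((x/(1-x^2) - ((q:ℝ)+2) * arctanh x) / x^(q+3)) x := by
  have hx2 : (0:ℝ) < 1 - x^2 := by nlinarith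
  have hxp : (0:ℝ) < x^(q+2) := by positivity
  have d1 := arctanh_hasDerivAt (by linarith : -1 < x) h1
  have d2 : HasDerivAt (fun y : ℝ => y^(q+2)) (((q:ℝ)+2) * x^(q+1)) x := by
    have h := hasDerivAt_pow (q+2) x
    have e1 : q+2-1 = q+1 := by omega
    have e2 : ((q+2:ℕ):ℝ) = (q:ℝ)+2 := by push_cast; ring
    rw [e1, e2] at h
    exact h
  have := d1.div d2 (ne_of_gt hxp)
  refine this.congr_deriv ?_
  rw [div_eq_div_iff (by positivity) (by positivity)]
  field_simp
  ring
lemma arctanh_pos {x : ℝ} (h0 : 0 < x) (h1 : x < 1) : 0 < arctanh x := by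
  unfold arctanh
  have hlt : (1:ℝ) < (1+x)/(1-x) := by
    rw [lt_div_iff₀ (by linarith)]; linarith
  have := Real.log_pos hlt
  linarith

lemma vfun_zero (q : ℕ) : (0:ℝ)/(1-(0:ℝ)^2) - ((q:ℝ)+2) * arctanh 0 = 0 := by
  simp [arctanh_zero]

lemma vfun_strictAntiOn (q : ℕ) :
    StrictAntiOn (fun y : ℝ => y/(1-y^2) - ((q:ℝ)+2) * arctanh y)
      (Icc 0 (Real.sqrt (((q:ℝ)+1)/((q:ℝ)+3)))) := by
  set r := Real.sqrt (((q:ℝ)+1)/((q:ℝ)+3)) with hr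
  have hrsq : r^2 = ((q:ℝ)+1)/((q:ℝ)+3) := Real.sq_sqrt (by positivity)
  have ha : ((q:ℝ)+1)/((q:ℝ)+3) < 1 := by
    rw [div_lt_one (by positivity)]; linarith
  have hr1 : r < 1 := by nlinarith [Real.sqrt_nonneg (((q:ℝ)+1)/((q:ℝ)+3))]
  apply strictAntiOn_of_deriv_neg (convex_Icc 0 r)
  · intro x hx
    exact ((vfun_hasDerivAt q (by linarith [hx.1] : -(1:ℝ) < x)
      (by linarith [hx.2] : x < 1)).continuousAt).continuousWithinAt
  · rw [interior_Icc]
    intro x hx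
    rw [(vfun_hasDerivAt q (by linarith [hx.1]) (by linarith [hx.2])).deriv]
    apply div_neg_of_neg_of_pos
    · have hx2 : x^2 < r^2 := by nlinarith [hx.1, hx.2]
      rw [hrsq, lt_div_iff₀ (by positivity : (0:ℝ) < (q:ℝ)+3)] at hx2
      nlinarith
    · have h1 : (0:ℝ) < 1 - x^2 := by nlinarith [hx.1, hx.2]
      positivity

lemma vfun_strictMonoOn (q : ℕ) :
    StrictMonoOn (fun y : ℝ => y/(1-y^2) - ((q:ℝ)+2) * arctanh y)
      (Ico (Real.sqrt (((q:ℝ)+1)/((q:ℝ)+3))) 1) := by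
  set r := Real.sqrt (((q:ℝ)+1)/((q:ℝ)+3)) with hr
  have hrsq : r^2 = ((q:ℝ)+1)/((q:ℝ)+3) := Real.sq_sqrt (by positivity)
  have hr0 : 0 < r := Real.sqrt_pos.mpr (by positivity)
  apply strictMonoOn_of_deriv_pos (convex_Ico r 1)
  · intro x hx
    exact ((vfun_hasDerivAt q (by linarith [hx.1] : -(1:ℝ) < x)
      (hx.2 : x < 1)).continuousAt).continuousWithinAt
  · rw [interior_Ico]
    intro x hx
    rw [(vfun_hasDerivAt q (by linarith [hx.1]) hx.2).deriv]
    apply div_pos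
    · have hx2 : r^2 < x^2 := by nlinarith [hx.1, hx.2]
      rw [hrsq, div_lt_iff₀ (by positivity : (0:ℝ) < (q:ℝ)+3)] at hx2
      nlinarith
    · have h1 : (0:ℝ) < 1 - x^2 := by nlinarith [hx.1, hx.2, hr0]
      positivity

lemma ufun_strictAntiOn (q : ℕ) {s : ℝ} (hs1 : s < 1)
    (hv : ∀ x ∈ Ioo (0:ℝ) s, x/(1-x^2) - ((q:ℝ)+2) * arctanh x < 0) :
    StrictAntiOn (fun y : ℝ => arctanh y / y^(q+2)) (Ioc 0 s) := by
  apply strictAntiOn_of_deriv_neg (convex_Ioc 0 s)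
  · intro x hx
    exact ((ufun_hasDerivAt q hx.1 (lt_of_le_of_lt hx.2 hs1)).continuousAt).continuousWithinAt
  · rw [interior_Ioc]
    intro x hx
    rw [(ufun_hasDerivAt q hx.1 (by linarith [hx.2])).deriv]
    exact div_neg_of_neg_of_pos (hv x hx) (pow_pos hx.1 _)

lemma ufun_strictMonoOn (q : ℕ) {s : ℝ} (hs0 : 0 < s)
    (hv : ∀ x ∈ Ioo s (1:ℝ), 0 < x/(1-x^2) - ((q:ℝ)+2) * arctanh x) :
    StrictMonoOn (fun y : ℝ => arctanh y / y^(q+2)) (Ico s 1) := by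
  apply strictMonoOn_of_deriv_pos (convex_Ico s 1)
  · intro x hx
    exact ((ufun_hasDerivAt q (lt_of_lt_of_le hs0 hx.1) hx.2).continuousAt).continuousWithinAt
  · rw [interior_Ico]
    intro x hx
    rw [(ufun_hasDerivAt q (by linarith [hx.1, hs0]) hx.2).deriv]
    exact div_pos (hv x hx) (pow_pos (by linarith [hx.1, hs0]) _)


lemma bahI_continuous : Continuous bahI := by
  have h1 : Continuous fun x : ℝ => (1 + x) * Real.log (1 + x) :=
    (Real.continuous_mul_log).comp (continuous_const.add continuous_id)
  have h2 : Continuous fun x : ℝ => (1 - x) * Real.log (1 - x) :=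
    (Real.continuous_mul_log).comp (continuous_const.sub continuous_id)
  exact ((h1.add h2).div_const 2)

lemma bahH_continuous (β : ℝ) (p : ℕ) : Continuous (bahH β p) :=
  ((continuous_const.mul (continuous_pow p))).sub bahI_continuous

lemma sub_one_le_mul_log {a : ℝ} (ha : 0 ≤ a) : a - 1 ≤ a * Real.log a := by
  rcases eq_or_lt_of_le ha with h | h
  · simp [← h]
  · have hl := Real.log_le_sub_one_of_pos (inv_pos.mpr h)
    rw [Real.log_inv] at hl
    have h' : a⁻¹ * a = 1 := inv_mul_cancel₀ h.ne'
    nlinarith [h]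

lemma bahI_nonneg {x : ℝ} (hx : x ∈ Set.Icc (-1:ℝ) 1) : 0 ≤ bahI x := by
  have h1 := sub_one_le_mul_log (a := 1 + x) (by linarith [hx.1])
  have h2 := sub_one_le_mul_log (a := 1 - x) (by linarith [hx.2])
  unfold bahI
  linarith

lemma bahI_zero : bahI 0 = 0 := by simp [bahI]

lemma betaStar_nonneg (p : ℕ) (hp : 1 ≤ p) : 0 ≤ betaStar p := by
  have hmem : (0:ℝ) ∈ {β : ℝ | 0 ≤ β ∧ sSup (bahH β p '' Set.Icc (-1 : ℝ) 1) = 0} := by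
    refine ⟨le_refl 0, ?_⟩
    apply IsGreatest.csSup_eq
    constructor
    · exact ⟨0, by simp, by simp [bahH, bahI_zero, zero_pow (by omega : p ≠ 0)]⟩
    · rintro y ⟨x, hx, rfl⟩
      have := bahI_nonneg hx
      simp [bahH]; linarith
  have hbdd : BddAbove {β : ℝ | 0 ≤ β ∧ sSup (bahH β p '' Set.Icc (-1 : ℝ) 1) = 0} := by
    refine ⟨bahI (1/2) * 2 ^ p, ?_⟩
    rintro β ⟨hβ0, hβs⟩
    have himg : BddAbove (bahH β p '' Set.Icc (-1 : ℝ) 1) :=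
      (isCompact_Icc.image (bahH_continuous β p)).bddAbove
    have hle : bahH β p (1/2) ≤ 0 := by
      rw [← hβs]
      exact le_csSup himg ⟨1/2, by norm_num, rfl⟩
    have hpow : ((1:ℝ)/2) ^ p * 2 ^ p = 1 := by
      rw [← mul_pow]; norm_num
    have h2 : β * (1/2:ℝ)^p ≤ bahI (1/2) := by
      simp only [bahH] at hle; linarith
    calc β = β * ((1/2:ℝ)^p * 2^p) := by rw [hpow]; ring
      _ = (β * (1/2:ℝ)^p) * 2^p := by ring
      _ ≤ bahI (1/2) * 2^p := by
          apply mul_le_mul_of_nonneg_right h2 (by positivity)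
  exact le_csSup hbdd hmem


lemma bahI_hasDerivAt {x : ℝ} (h1 : -1 < x) (h2 : x < 1) :
    HasDerivAt bahI (arctanh x) x := by
  have hx1 : (0:ℝ) < 1 + x := by linarith
  have hx2 : (0:ℝ) < 1 - x := by linarith
  have d1 : HasDerivAt (fun y : ℝ => (1+y) * Real.log (1+y))
      (Real.log (1+x) + 1) x := by
    have da : HasDerivAt (fun y : ℝ => 1 + y) 1 x := (hasDerivAt_id x).const_add 1
    have db : HasDerivAt (fun y : ℝ => Real.log (1+y)) (1/(1+x)) x := by
      simpa using da.log (ne_of_gt hx1)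
    have := da.mul db
    refine this.congr_deriv ?_
    field_simp
  have d2 : HasDerivAt (fun y : ℝ => (1-y) * Real.log (1-y))
      (-(Real.log (1-x) + 1)) x := by
    have da : HasDerivAt (fun y : ℝ => 1 - y) (-1) x := by
      simpa using ((hasDerivAt_id x).const_sub 1)
    have db : HasDerivAt (fun y : ℝ => Real.log (1-y)) (-(1/(1-x))) x := by
      have := da.log (ne_of_gt hx2)
      simpa [div_eq_mul_inv] using this
    have := da.mul db
    refine this.congr_deriv ?_
    field_simp
    ring
  have := (d1.add d2).div_const 2
  have hval : (Real.log (1+x) + 1 + -(Real.log (1-x) + 1))/2 = arctanh x := by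
    unfold arctanh
    rw [Real.log_div (ne_of_gt hx1) (ne_of_gt hx2)]
    ring
  rw [← hval]
  exact this

lemma bahH_hasDerivAt (β : ℝ) (p : ℕ) {x : ℝ} (h1 : -1 < x) (h2 : x < 1) :
    HasDerivAt (bahH β p) (β * p * x ^ (p-1) - arctanh x) x := by
  have d1 : HasDerivAt (fun y : ℝ => β * y ^ p) (β * (p * x ^ (p-1))) x :=
    (hasDerivAt_pow p x).const_mul β
  have := d1.sub (bahI_hasDerivAt h1 h2)
  refine this.congr_deriv ?_
  ring

set_option maxHeartbeats 1000000 in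
/-- For `p ≥ 3`, `β > β*(p)` and `m = m_*(β,p)` the positive global maximizer of
`H_{β,p}` on `[−1,1]`: the derivative `H'_{β,p}(x) = βp x^{p−1} − arctanh x` has at
most 3 zeros in `(0,1)`, and there is `m̲ ∈ (0,m)` with `H' ≤ 0` on `(0,m̲)`,
`H' ≥ 0` on `(m̲,m)` and `H' ≤ 0` on `(m,1)`. -/
theorem statement3 (p : ℕ) (hp : 3 ≤ p) (β : ℝ) (hβ : betaStar p < β)
    (m : ℝ) (hm0 : 0 < m) (hm1 : m ∈ Set.Icc (-1 : ℝ) 1)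
    (hmax : IsMaxOn (bahH β p) (Set.Icc (-1 : ℝ) 1) m) :
    ({x ∈ Set.Ioo (0 : ℝ) 1 | β * p * x ^ (p - 1) - arctanh x = 0}.Finite ∧
      {x ∈ Set.Ioo (0 : ℝ) 1 | β * p * x ^ (p - 1) - arctanh x = 0}.ncard ≤ 3) ∧
    ∃ m' ∈ Set.Ioo 0 m,
      (∀ x ∈ Set.Ioo 0 m', β * p * x ^ (p - 1) - arctanh x ≤ 0) ∧
      (∀ x ∈ Set.Ioo m' m, 0 ≤ β * p * x ^ (p - 1) - arctanh x) ∧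
      (∀ x ∈ Set.Ioo m 1, β * p * x ^ (p - 1) - arctanh x ≤ 0) := by
  obtain ⟨q, rfl⟩ : ∃ q, p = q + 3 := ⟨p - 3, by omega⟩
  clear hp
  have hexp : q + 3 - 1 = q + 2 := by omega
  have hcast : ((q+3:ℕ):ℝ) = (q:ℝ)+3 := by push_cast; ring
  set c : ℝ := β * ((q:ℝ)+3) with hc_def
  -- β > 0
  have hβ0 : 0 < β := lt_of_le_of_lt (betaStar_nonneg (q+3) (by omega)) hβ
  have hc0 : 0 < c := by
    rw [hc_def]; positivity
  -- values of H
  have hH0 : bahH β (q+3) 0 = 0 := by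
    have h0 : (0:ℝ)^(q+3) = 0 := zero_pow (by omega)
    simp [bahH, bahI, h0]
  have hHm : 0 ≤ bahH β (q+3) m := by
    have h2 : bahH β (q+3) 0 ≤ bahH β (q+3) m := hmax (show (0:ℝ) ∈ Set.Icc (-1:ℝ) 1 by norm_num)
    rw [hH0] at h2
    exact h2
  -- m < 1
  have hm1' : m < 1 := by
    rcases lt_or_eq_of_le hm1.2 with h | h
    · exact h
    · exfalso
      set ε : ℝ := rexp (-(2*(c+1))) with hε_def
      have hε0 : 0 < ε := Real.exp_pos _
      have hε1 : ε < 1 := by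
        rw [hε_def]
        apply Real.exp_lt_one_iff.mpr
        nlinarith
      set x₁ : ℝ := 1 - ε with hx₁_def
      have hx₁0 : 0 < x₁ := by rw [hx₁_def]; linarith
      have hx₁1 : x₁ < 1 := by rw [hx₁_def]; linarith
      have harc : c + 1 ≤ arctanh x₁ := by
        have h1 : (1:ℝ)/ε ≤ (1+x₁)/(1-x₁) := by
          rw [show (1:ℝ) - x₁ = ε by rw [hx₁_def]; ring,
            div_le_div_iff₀ hε0 hε0]
          nlinarith
        have h2 := Real.log_le_log (by positivity) h1
        rw [Real.log_div one_ne_zero (ne_of_gt hε0), Real.log_one, hε_def, Real.log_exp] at h2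
        unfold arctanh
        linarith
      obtain ⟨ξ, hξ, hslope⟩ := exists_hasDerivAt_eq_slope (bahH β (q+3))
        (fun y => β * ((q+3:ℕ):ℝ) * y^(q+3-1) - arctanh y) hx₁1
        ((bahH_continuous β (q+3)).continuousOn)
        (fun y hy => by
          have := bahH_hasDerivAt β (q+3) (show -1 < y by linarith [hy.1]) hy.2
          exact this)
      have hsl0 : 0 ≤ (bahH β (q+3) 1 - bahH β (q+3) x₁) / (1 - x₁) := by
        apply div_nonneg _ (by linarith)
        have h2 : bahH β (q+3) x₁ ≤ bahH β (q+3) m :=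
          hmax (show x₁ ∈ Set.Icc (-1:ℝ) 1 by constructor <;> linarith)
        rw [← h]
        linarith [h2]
      rw [← hslope] at hsl0
      simp only [hexp, hcast] at hsl0
      have hξp : ξ^(q+2) ≤ 1 := pow_le_one₀ (by linarith [hξ.1]) (le_of_lt hξ.2)
      have harcξ : c + 1 ≤ arctanh ξ := by
        refine le_trans harc (arctanh_le_arctanh (by linarith) (le_of_lt hξ.1) hξ.2)
      rw [← hc_def] at hsl0
      nlinarith [hsl0, hξp, harcξ, hc0]
  have hmIoo : m ∈ Set.Ioo (-1:ℝ) 1 := ⟨by linarith, hm1'⟩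
  -- derivative vanishes at m
  have hφm : c * m^(q+2) - arctanh m = 0 := by
    have hloc : IsLocalMax (bahH β (q+3)) m :=
      hmax.isLocalMax (Icc_mem_nhds (by linarith) (by linarith))
    have h := hloc.hasDerivAt_eq_zero (bahH_hasDerivAt β (q+3) hmIoo.1 hmIoo.2)
    rw [hexp, hcast, ← hc_def] at h
    exact h
  have hmp : (0:ℝ) < m^(q+2) := pow_pos hm0 _
  have hum : arctanh m / m^(q+2) = c := by
    rw [div_eq_iff (ne_of_gt hmp)]; linarith
  -- a point cp in (0,m) with derivative ≥ 0
  obtain ⟨cp, hcp, hcps⟩ := exists_hasDerivAt_eq_slope (bahH β (q+3))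
    (fun y => β * ((q+3:ℕ):ℝ) * y^(q+3-1) - arctanh y) hm0
    ((bahH_continuous β (q+3)).continuousOn)
    (fun y hy => by
      have := bahH_hasDerivAt β (q+3) (show -1 < y by linarith [hy.1])
        (show y < 1 by linarith [hy.2])
      exact this)
  have hcp1 : cp < 1 := by linarith [hcp.2]
  have hcpp : (0:ℝ) < cp^(q+2) := pow_pos hcp.1 _
  have hucp : arctanh cp / cp^(q+2) ≤ c := by
    have hsl0 : 0 ≤ (bahH β (q+3) m - bahH β (q+3) 0) / (m - 0) := by
      apply div_nonneg _ (by linarith)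
      rw [hH0]; linarith
    rw [← hcps] at hsl0
    simp only [hexp, hcast] at hsl0
    rw [← hc_def] at hsl0
    rw [div_le_iff₀ hcpp]
    linarith
  -- v facts
  set r := Real.sqrt (((q:ℝ)+1)/((q:ℝ)+3)) with hr_def
  have hr0 : 0 < r := Real.sqrt_pos.mpr (by positivity)
  have hrsq : r^2 = ((q:ℝ)+1)/((q:ℝ)+3) := Real.sq_sqrt (by positivity)
  have hr1 : r < 1 := by
    have ha : ((q:ℝ)+1)/((q:ℝ)+3) < 1 := by
      rw [div_lt_one (by positivity)]; linarith
    nlinarith [Real.sqrt_nonneg (((q:ℝ)+1)/((q:ℝ)+3))]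
  have hv_neg : ∀ x : ℝ, 0 < x → x ≤ r → x/(1-x^2) - ((q:ℝ)+2) * arctanh x < 0 := by
    intro x hx0 hxr
    have := vfun_strictAntiOn q (show (0:ℝ) ∈ Set.Icc (0:ℝ) r by exact ⟨le_refl 0, le_of_lt hr0⟩)
      (show x ∈ Set.Icc (0:ℝ) r from ⟨le_of_lt hx0, hxr⟩) hx0
    simpa [arctanh_zero] using this
  -- v m > 0
  have hvm : 0 < m/(1-m^2) - ((q:ℝ)+2) * arctanh m := by
    by_contra hcon
    push_neg at hcon
    have hvneg : ∀ x ∈ Set.Ioo (0:ℝ) m, x/(1-x^2) - ((q:ℝ)+2) * arctanh x < 0 := by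
      intro x hx
      rcases le_or_gt x r with hxr | hxr
      · exact hv_neg x hx.1 hxr
      · have hmem1 : x ∈ Set.Ico r 1 := ⟨le_of_lt hxr, by linarith [hx.2]⟩
        have hmem2 : m ∈ Set.Ico r 1 := ⟨by linarith [hx.2], hm1'⟩
        have := vfun_strictMonoOn q hmem1 hmem2 hx.2
        simp only at this
        linarith
    have hanti := ufun_strictAntiOn q hm1' hvneg
    have := hanti (show cp ∈ Set.Ioc 0 m from ⟨hcp.1, le_of_lt hcp.2⟩)
      (show m ∈ Set.Ioc 0 m from ⟨hm0, le_refl m⟩) hcp.2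
    simp only at this
    rw [hum] at this
    linarith
  -- r < m
  have hrm : r < m := by
    by_contra hcon
    push_neg at hcon
    have := hv_neg m hm0 hcon
    linarith
  -- find s : zero of v in (r, m)
  have hvr : r/(1-r^2) - ((q:ℝ)+2) * arctanh r < 0 := hv_neg r hr0 (le_refl r)
  have hvcont : ContinuousOn (fun y : ℝ => y/(1-y^2) - ((q:ℝ)+2) * arctanh y) (Set.Icc r m) :=
    fun x hx => ((vfun_hasDerivAt q (by linarith [hx.1]) (by linarith [hx.2])).continuousAt).continuousWithinAt
  obtain ⟨s, hs_mem, hvs⟩ : ∃ s ∈ Set.Ioo r m,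
      s/(1-s^2) - ((q:ℝ)+2) * arctanh s = 0 := by
    have h := intermediate_value_Ioo (le_of_lt hrm) hvcont
    have h0 : (0:ℝ) ∈ Set.Ioo (r/(1-r^2) - ((q:ℝ)+2) * arctanh r)
        (m/(1-m^2) - ((q:ℝ)+2) * arctanh m) := ⟨hvr, hvm⟩
    obtain ⟨s, hs, hval⟩ := h h0
    exact ⟨s, hs, hval⟩
  have hs0 : 0 < s := lt_trans hr0 hs_mem.1
  have hs1 : s < 1 := lt_trans hs_mem.2 hm1'
  have hsm : s < m := hs_mem.2
  -- sign of v on both sides of s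
  have hv_neg_s : ∀ x ∈ Set.Ioo (0:ℝ) s, x/(1-x^2) - ((q:ℝ)+2) * arctanh x < 0 := by
    intro x hx
    rcases le_or_gt x r with hxr | hxr
    · exact hv_neg x hx.1 hxr
    · have := vfun_strictMonoOn q (show x ∈ Set.Ico r 1 from ⟨le_of_lt hxr, by linarith [hx.2]⟩)
        (show s ∈ Set.Ico r 1 from ⟨le_of_lt hs_mem.1, hs1⟩) hx.2
      simp only at this
      linarith
  have hv_pos_s : ∀ x ∈ Set.Ioo s (1:ℝ), 0 < x/(1-x^2) - ((q:ℝ)+2) * arctanh x := by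
    intro x hx
    have := vfun_strictMonoOn q (show s ∈ Set.Ico r 1 from ⟨le_of_lt hs_mem.1, hs1⟩)
      (show x ∈ Set.Ico r 1 from ⟨by linarith [hx.1, hs_mem.1], hx.2⟩) hx.1
    simp only at this
    linarith
  -- u monotone
  have hu_anti := ufun_strictAntiOn q hs1 hv_neg_s
  have hu_mono := ufun_strictMonoOn q hs0 hv_pos_s
  -- m > s
  have hsm' : s < m := hsm
  -- u s < c
  have hus : arctanh s / s^(q+2) < c := by
    have := hu_mono (show s ∈ Set.Ico s 1 from ⟨le_refl s, hs1⟩)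
      (show m ∈ Set.Ico s 1 from ⟨le_of_lt hsm, hm1'⟩) hsm
    simp only at this
    rw [hum] at this
    exact this
  -- point x₀ with u x₀ > c
  set x₀ : ℝ := min (s/2) (1/(c+1)) with hx₀_def
  have hx₀0 : 0 < x₀ := lt_min (by linarith) (by positivity)
  have hx₀s : x₀ < s := lt_of_le_of_lt (min_le_left _ _) (by linarith)
  have hx₀1 : x₀ < 1 := by linarith
  have hx₀c : x₀ ≤ 1/(c+1) := min_le_right _ _
  have hux₀ : c < arctanh x₀ / x₀^(q+2) := by
    have h1 : x₀ ≤ arctanh x₀ := self_le_arctanh (le_of_lt hx₀0) hx₀1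
    have h2 : x₀^(q+1) ≤ x₀ := pow_le_of_le_one (le_of_lt hx₀0) (le_of_lt hx₀1) (by omega)
    have h3 : (c+1) * x₀ ≤ 1 := by
      rw [← le_div_iff₀' (by positivity)]
      exact hx₀c
    have h4 : (c+1) * x₀^(q+2) ≤ x₀ := by
      have : x₀^(q+2) = x₀^(q+1) * x₀ := by ring
      rw [this]
      calc (c+1) * (x₀^(q+1) * x₀) = ((c+1) * x₀) * x₀^(q+1) := by ring
        _ ≤ 1 * x₀^(q+1) := by
            apply mul_le_mul_of_nonneg_right h3 (by positivity)
        _ = x₀^(q+1) := by ring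
        _ ≤ x₀ := h2
    have h5 : (c+1) * x₀^(q+2) ≤ arctanh x₀ := le_trans h4 h1
    have hxp : (0:ℝ) < x₀^(q+2) := pow_pos hx₀0 _
    rw [lt_div_iff₀ hxp]
    nlinarith
  -- find m' : point where u = c in (x₀, s)
  have hucont : ContinuousOn (fun y : ℝ => arctanh y / y^(q+2)) (Set.Icc x₀ s) :=
    fun x hx => ((ufun_hasDerivAt q (by linarith [hx.1]) (by linarith [hx.2])).continuousAt).continuousWithinAt
  obtain ⟨m', hm'_mem, hum'⟩ : ∃ m' ∈ Set.Ioo x₀ s, arctanh m' / m'^(q+2) = c := by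
    have h := intermediate_value_Ioo' (le_of_lt hx₀s) hucont
    have h0 : c ∈ Set.Ioo (arctanh s / s^(q+2)) (arctanh x₀ / x₀^(q+2)) := ⟨hus, hux₀⟩
    obtain ⟨m', hm', hval⟩ := h h0
    exact ⟨m', hm', hval⟩
  have hm'0 : 0 < m' := lt_trans hx₀0 hm'_mem.1
  have hm's : m' < s := hm'_mem.2
  have hm'm : m' < m := lt_trans hm's hsm
  -- strict sign facts
  have SA : ∀ x ∈ Set.Ioo (0:ℝ) m', c < arctanh x / x^(q+2) := by
    intro x hx
    have := hu_anti (show x ∈ Set.Ioc 0 s from ⟨hx.1, by linarith [hx.2]⟩)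
      (show m' ∈ Set.Ioc 0 s from ⟨hm'0, le_of_lt hm's⟩) hx.2
    simp only at this
    rw [hum'] at this
    exact this
  have SB : ∀ x ∈ Set.Ioo m' m, arctanh x / x^(q+2) < c := by
    intro x hx
    rcases le_or_gt x s with hxs | hxs
    · have := hu_anti (show m' ∈ Set.Ioc 0 s from ⟨hm'0, le_of_lt hm's⟩)
        (show x ∈ Set.Ioc 0 s from ⟨by linarith [hx.1], hxs⟩) hx.1
      simp only at this
      rw [hum'] at this
      exact this
    · have := hu_mono (show x ∈ Set.Ico s 1 from ⟨le_of_lt hxs, by linarith [hx.2]⟩)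
        (show m ∈ Set.Ico s 1 from ⟨le_of_lt hsm, hm1'⟩) hx.2
      simp only at this
      rw [hum] at this
      exact this
  have SC : ∀ x ∈ Set.Ioo m (1:ℝ), c < arctanh x / x^(q+2) := by
    intro x hx
    have := hu_mono (show m ∈ Set.Ico s 1 from ⟨le_of_lt hsm, hm1'⟩)
      (show x ∈ Set.Ico s 1 from ⟨by linarith [hx.1], hx.2⟩) hx.1
    simp only at this
    rw [hum] at this
    exact this
  -- bridge between u-form and the goal form
  have bridge_lt : ∀ x : ℝ, 0 < x → c < arctanh x / x^(q+2) →
      β * ((q+3:ℕ):ℝ) * x^(q+3-1) - arctanh x < 0 := by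
    intro x hx0 h
    rw [hexp, hcast, ← hc_def]
    have hxp : (0:ℝ) < x^(q+2) := pow_pos hx0 _
    rw [lt_div_iff₀ hxp] at h
    linarith
  have bridge_gt : ∀ x : ℝ, 0 < x → arctanh x / x^(q+2) < c →
      0 < β * ((q+3:ℕ):ℝ) * x^(q+3-1) - arctanh x := by
    intro x hx0 h
    rw [hexp, hcast, ← hc_def]
    have hxp : (0:ℝ) < x^(q+2) := pow_pos hx0 _
    rw [div_lt_iff₀ hxp] at h
    linarith
  have bridge_eq : ∀ x : ℝ, 0 < x → β * ((q+3:ℕ):ℝ) * x^(q+3-1) - arctanh x = 0 →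
      arctanh x / x^(q+2) = c := by
    intro x hx0 h
    rw [hexp, hcast, ← hc_def] at h
    have hxp : (0:ℝ) < x^(q+2) := pow_pos hx0 _
    rw [div_eq_iff (ne_of_gt hxp)]
    linarith
  -- zero set is contained in {m', m}
  have hZsub : {x ∈ Set.Ioo (0:ℝ) 1 | β * ((q+3:ℕ):ℝ) * x ^ (q+3-1) - arctanh x = 0}
      ⊆ {m', m} := by
    rintro x ⟨hx, hx0⟩
    have hux := bridge_eq x hx.1 hx0
    rcases lt_trichotomy x m' with h | h | h
    · exfalso
      have := SA x ⟨hx.1, h⟩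
      rw [hux] at this
      exact lt_irrefl c this
    · exact Or.inl h
    · rcases lt_trichotomy x m with h2 | h2 | h2
      · exfalso
        have := SB x ⟨h, h2⟩
        rw [hux] at this
        exact lt_irrefl c this
      · exact Or.inr h2
      · exfalso
        have := SC x ⟨h2, hx.2⟩
        rw [hux] at this
        exact lt_irrefl c this
  have hpair : ({m', m} : Set ℝ).Finite := (Set.finite_singleton m).insert m'
  constructor
  · constructor
    · exact hpair.subset hZsub
    · calc {x ∈ Set.Ioo (0:ℝ) 1 | β * ((q+3:ℕ):ℝ) * x ^ (q+3-1) - arctanh x = 0}.ncard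
          ≤ ({m', m} : Set ℝ).ncard := Set.ncard_le_ncard hZsub hpair
        _ ≤ 2 := by
            apply le_trans (Set.ncard_insert_le m' {m})
            simp [Set.ncard_singleton]
        _ ≤ 3 := by norm_num
  · refine ⟨m', ⟨hm'0, hm'm⟩, ?_, ?_, ?_⟩
    · intro x hx
      exact le_of_lt (bridge_lt x hx.1 (SA x hx))
    · intro x hx
      exact le_of_lt (bridge_gt x (by linarith [hx.1]) (SB x hx))
    · intro x hx
      exact le_of_lt (bridge_lt x (by linarith [hx.1]) (SC x hx))
end
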